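/- Let {a_n}_{n≥1} be a real sequence with initial values a_1, …, a_k satisfying a_{n+1} = c_1 a_n + c_2 a_{n−1} + ⋯ + c_k a_{n+1−k} for all n ≥ k. Define d_i = Σ_{j=1}^{i−1} a_j c_{i−j} for 2 ≤ i ≤ k, and Q(x) = a_1 x^{k−1} + (a_2 − d_2) x^{k−2} + (a_3 − d_3) x^{k−3} + ⋯ + (a_k − d_k). Then the limit L = lim_{n→∞} a_n / r^n exists, and L is positive, zero, or negative according as Q(r) is positive, zero, or negative. -/

import Mathlib

open Finset Filter


open Finset

lemma succ_mem_closure (S : Finset ℕ) (hgcd : S.gcd id = 1) :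
    ∃ u v : ℕ, u ∈ AddSubmonoid.closure (S : Set ℕ) ∧
      v ∈ AddSubmonoid.closure (S : Set ℕ) ∧ v = u + 1 := by
  set Cn := AddSubmonoid.closure (S : Set ℕ) with hCn
  set T : AddSubgroup ℤ := AddSubgroup.closure ((fun n : ℕ => (n : ℤ)) '' S) with hT
  have hmem : (1 : ℤ) ∈ T := by
    obtain ⟨g, hg⟩ := Int.subgroup_cyclic T
    have hdvd : (g.natAbs : ℕ) ∣ 1 := by
      rw [← hgcd]
      apply Finset.dvd_gcd
      intro s hs
      have hsT : (s : ℤ) ∈ T := AddSubgroup.subset_closure ⟨s, hs, rfl⟩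
      rw [hg, ← AddSubgroup.zmultiples_eq_closure] at hsT
      obtain ⟨n, hn⟩ := hsT
      have : g ∣ (s : ℤ) := ⟨n, by simpa [zsmul_eq_mul, mul_comm] using hn.symm⟩
      exact Int.natAbs_dvd_natAbs.mpr (by simpa using this)
    rw [hg, ← AddSubgroup.zmultiples_eq_closure]
    rcases Int.natAbs_eq_iff.mp (Nat.eq_one_of_dvd_one hdvd) with h | h
    · exact ⟨1, by simp [h]⟩
    · exact ⟨-1, by simp [h]⟩
  have key : ∀ z ∈ T, ∃ u v : ℕ, u ∈ Cn ∧ v ∈ Cn ∧ (v : ℤ) - u = z := by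
    intro z hz
    induction hz using AddSubgroup.closure_induction with
    | mem x hx =>
      obtain ⟨s, hs, rfl⟩ := hx
      exact ⟨0, s, AddSubmonoid.zero_mem _, AddSubmonoid.subset_closure hs, by simp⟩
    | zero => exact ⟨0, 0, AddSubmonoid.zero_mem _, AddSubmonoid.zero_mem _, by simp⟩
    | add x y hx hy ihx ihy =>
      obtain ⟨u1, v1, hu1, hv1, h1⟩ := ihx
      obtain ⟨u2, v2, hu2, hv2, h2⟩ := ihy
      exact ⟨u1 + u2, v1 + v2, AddSubmonoid.add_mem _ hu1 hu2,
        AddSubmonoid.add_mem _ hv1 hv2, by push_cast; linarith⟩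
    | neg x hx ihx =>
      obtain ⟨u1, v1, hu1, hv1, h1⟩ := ihx
      exact ⟨v1, u1, hv1, hu1, by push_cast; linarith⟩
  obtain ⟨u, v, hu, hv, h⟩ := key 1 hmem
  exact ⟨u, v, hu, hv, by omega⟩

lemma all_large_mem (S : Finset ℕ) (hgcd : S.gcd id = 1) :
    ∃ N, ∀ n, N ≤ n → n ∈ AddSubmonoid.closure (S : Set ℕ) := by
  obtain ⟨u, v, hu, hv, huv⟩ := succ_mem_closure S hgcd
  rcases Nat.eq_zero_or_pos u with h0 | hpos
  · subst h0
    refine ⟨0, fun n _ => ?_⟩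
    have : n • v ∈ AddSubmonoid.closure (S : Set ℕ) := AddSubmonoid.nsmul_mem _ hv n
    simpa [huv] using this
  · refine ⟨u * u, fun n hn => ?_⟩
    have hmq : n % u ≤ n / u := by
      have h1 : n % u < u := Nat.mod_lt _ hpos
      have h2 : u ≤ n / u := (Nat.le_div_iff_mul_le hpos).mpr hn
      omega
    obtain ⟨t, ht⟩ := Nat.le.dest hmq
    have h3 : n = u * (n / u) + n % u := (Nat.div_add_mod n u).symm
    have h4 : n = u * (n % u + t) + n % u := by rw [ht]; exact h3
    have hdiv : n = t * u + (n % u) * v := by rw [huv]; linear_combination h4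
    rw [hdiv]
    exact AddSubmonoid.add_mem _
      (by simpa [smul_eq_mul] using AddSubmonoid.nsmul_mem (AddSubmonoid.closure (S:Set ℕ)) hu t)
      (by simpa [smul_eq_mul] using AddSubmonoid.nsmul_mem (AddSubmonoid.closure (S:Set ℕ)) hv (n % u))

lemma key_conv (k : ℕ) (hk : 1 ≤ k) (lam : ℕ → ℝ) (hnn : ∀ i, 0 ≤ lam i)
    (hsum : ∑ i ∈ Icc 1 k, lam i = 1)
    (S : Finset ℕ) (hSsub : S ⊆ Icc 1 k) (hSpos : ∀ s ∈ S, 0 < lam s)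
    (hgcd : S.gcd id = 1)
    (b : ℕ → ℝ)
    (hb : ∀ n, k ≤ n → b (n + 1) = ∑ i ∈ Icc 1 k, lam i * b (n + 1 - i)) :
    ∃ L, Tendsto b atTop (nhds L) := by
  have hne : ∀ n : ℕ, (Icc (n + 1) (n + k)).Nonempty :=
    fun n => ⟨n + 1, by simp [mem_Icc]; omega⟩
  set M : ℕ → ℝ := fun n => (Icc (n + 1) (n + k)).sup' (hne n) b with hM
  set m : ℕ → ℝ := fun n => (Icc (n + 1) (n + k)).inf' (hne n) b with hm
  -- one recurrence step stays in the window bounds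
  have hstep_le : ∀ n : ℕ, b (n + k + 1) ≤ M n := by
    intro n
    rw [hb (n + k) (by omega)]
    calc ∑ i ∈ Icc 1 k, lam i * b (n + k + 1 - i)
        ≤ ∑ i ∈ Icc 1 k, lam i * M n := by
          apply Finset.sum_le_sum
          intro i hi
          simp only [mem_Icc] at hi
          exact mul_le_mul_of_nonneg_left
            (Finset.le_sup' b (by simp [mem_Icc]; omega)) (hnn i)
      _ = M n := by rw [← Finset.sum_mul, hsum, one_mul]
  have hstep_ge : ∀ n : ℕ, m n ≤ b (n + k + 1) := by
    intro n
    rw [hb (n + k) (by omega)]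
    have h1 : m n = ∑ i ∈ Icc 1 k, lam i * m n := by
      rw [← Finset.sum_mul, hsum, one_mul]
    rw [h1]
    apply Finset.sum_le_sum
    intro i hi
    simp only [mem_Icc] at hi
    exact mul_le_mul_of_nonneg_left
      (Finset.inf'_le b (by simp [mem_Icc]; omega)) (hnn i)
  -- M antitone, m monotone
  have hManti : Antitone M := by
    apply antitone_nat_of_succ_le
    intro n
    apply Finset.sup'_le
    intro j hj
    simp only [mem_Icc] at hj
    rcases Nat.lt_or_ge j (n + k + 1) with h | h
    · exact Finset.le_sup' b (by simp [mem_Icc]; omega)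
    · have : j = n + k + 1 := by omega
      subst this
      exact hstep_le n
  have hmmono : Monotone m := by
    apply monotone_nat_of_le_succ
    intro n
    apply Finset.le_inf'
    intro j hj
    simp only [mem_Icc] at hj
    rcases Nat.lt_or_ge j (n + k + 1) with h | h
    · exact Finset.inf'_le b (by simp [mem_Icc]; omega)
    · have : j = n + k + 1 := by omega
      subst this
      exact hstep_ge n
  have hmM : ∀ n, m n ≤ M n := fun n => le_trans (Finset.inf'_le b (Finset.mem_Icc.mpr ⟨le_refl _, by omega⟩)) (Finset.le_sup' b (Finset.mem_Icc.mpr ⟨le_refl _, by omega⟩))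
  have hmlM : ∀ n p, m n ≤ M p := by
    intro n p
    rcases le_total n p with h | h
    · exact le_trans (hmmono h) (hmM p)
    · exact le_trans (hmM n) (hManti h)
  have hbddM : BddBelow (Set.range M) := ⟨m 0, by rintro _ ⟨n, rfl⟩; exact hmlM 0 n⟩
  have hbddm : BddAbove (Set.range m) := ⟨M 0, by rintro _ ⟨n, rfl⟩; exact hmlM n 0⟩
  set Mi : ℝ := ⨅ n, M n with hMi
  set ms : ℝ := ⨆ n, m n with hms
  have htM : Tendsto M atTop (nhds Mi) := tendsto_atTop_ciInf hManti hbddM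
  have htm : Tendsto m atTop (nhds ms) := tendsto_atTop_ciSup hmmono hbddm
  have hMiLe : ∀ n, Mi ≤ M n := fun n => ciInf_le hbddM n
  have hmsGe : ∀ n, m n ≤ ms := fun n => le_ciSup hbddm n
  have hmsMi : ms ≤ Mi := ciSup_le fun n => le_ciInf fun p => hmlM n p
  -- b j is bounded by the window at j-1
  have hbup : ∀ j, 1 ≤ j → b j ≤ M (j - 1) := by
    intro j hj
    exact Finset.le_sup' b (by simp [mem_Icc]; omega)
  have hblow : ∀ j, 1 ≤ j → m (j - 1) ≤ b j := by
    intro j hj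
    exact Finset.inf'_le b (by simp [mem_Icc]; omega)
  -- the deficit-propagation property
  have Psi : ∀ t ∈ AddSubmonoid.closure (S : Set ℕ), ∃ ρ : ℝ, 0 < ρ ∧ ρ ≤ 1 ∧
      ∀ (n0 : ℕ) (X D : ℝ), 0 ≤ D → k + 1 ≤ n0 →
        (∀ j, n0 - k ≤ j → b j ≤ X) → b n0 ≤ X - D → b (n0 + t) ≤ X - ρ * D := by
    intro t ht
    induction ht using AddSubmonoid.closure_induction with
    | mem s hs =>
      have hsS : s ∈ S := hs
      have hsk : 1 ≤ s ∧ s ≤ k := by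
        have := hSsub hsS; simp only [mem_Icc] at this; exact this
      refine ⟨lam s, hSpos s hsS, ?_, ?_⟩
      · rw [← hsum]
        exact Finset.single_le_sum (fun i _ => hnn i) (by simp [mem_Icc]; omega)
      intro n0 X D hD hn0 hX hb0
      have heq : b (n0 + s) = ∑ i ∈ Icc 1 k, lam i * b (n0 + s - i) := by
        have h2 := hb (n0 + s - 1) (by omega)
        have h3 : n0 + s - 1 + 1 = n0 + s := by omega
        rw [h3] at h2
        exact h2
      have hterm : ∀ i ∈ Icc 1 k,
          lam i * b (n0 + s - i) ≤ lam i * X - (if i = s then lam s * D else 0) := by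
        intro i hi
        simp only [mem_Icc] at hi
        by_cases his : i = s
        · subst his
          rw [if_pos rfl]
          have h4 : n0 + i - i = n0 := by omega
          rw [h4]
          have := mul_le_mul_of_nonneg_left hb0 (hnn i)
          linarith [this]
        · simp only [if_neg his, sub_zero]
          exact mul_le_mul_of_nonneg_left (hX (n0 + s - i) (by omega)) (hnn i)
      calc b (n0 + s) = ∑ i ∈ Icc 1 k, lam i * b (n0 + s - i) := heq
        _ ≤ ∑ i ∈ Icc 1 k, (lam i * X - (if i = s then lam s * D else 0)) :=
            Finset.sum_le_sum hterm
        _ = X - lam s * D := by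
            rw [Finset.sum_sub_distrib, ← Finset.sum_mul, hsum, one_mul,
              Finset.sum_ite_eq' (Icc 1 k) s (fun _ => lam s * D),
              if_pos (by simp [mem_Icc]; omega : s ∈ Icc 1 k)]
    | zero =>
      refine ⟨1, one_pos, le_refl 1, ?_⟩
      intro n0 X D hD hn0 hX hb0
      simpa using hb0
    | add x y hx hy ihx ihy =>
      obtain ⟨ρx, hρx0, hρx1, hPx⟩ := ihx
      obtain ⟨ρy, hρy0, hρy1, hPy⟩ := ihy
      refine ⟨ρy * ρx, mul_pos hρy0 hρx0,
        mul_le_one₀ hρy1 (le_of_lt hρx0) hρx1, ?_⟩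
      intro n0 X D hD hn0 hX hb0
      have h1 : b (n0 + x) ≤ X - ρx * D := hPx n0 X D hD hn0 hX hb0
      have h2 : b (n0 + x + y) ≤ X - ρy * (ρx * D) := by
        apply hPy (n0 + x) X (ρx * D) (mul_nonneg (le_of_lt hρx0) hD) (by omega) _ h1
        intro j hj
        exact hX j (by omega)
      have h3 : n0 + (x + y) = n0 + x + y := by omega
      rw [h3]
      calc b (n0 + x + y) ≤ X - ρy * (ρx * D) := h2
        _ = X - ρy * ρx * D := by ring
  -- main claim : ms = Mi
  have hEq : ms = Mi := by
    by_contra hne'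
    have hlt : ms < Mi := lt_of_le_of_ne hmsMi hne'
    obtain ⟨N, hN⟩ := all_large_mem S hgcd
    choose! ρ hρ0 hρ1 hρP using Psi
    have hrange_ne : (range k).Nonempty := ⟨0, by simp; omega⟩
    set ρmin : ℝ := (range k).inf' hrange_ne (fun j => ρ (N + j)) with hρmin
    have hρminpos : 0 < ρmin := by
      rw [hρmin, Finset.lt_inf'_iff]
      intro j hj
      exact hρ0 (N + j) (hN (N + j) (by omega))
    set ε : ℝ := ρmin * (Mi - ms) / 2 with hε
    have hεpos : 0 < ε := by
      apply div_pos (mul_pos hρminpos (by linarith)) two_pos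
    obtain ⟨N1, hN1⟩ : ∃ n, M n < Mi + ε := by
      apply exists_lt_of_ciInf_lt
      rw [← hMi]; linarith
    have hup : ∀ j, N1 + 1 ≤ j → b j ≤ Mi + ε := by
      intro j hj
      calc b j ≤ M (j - 1) := hbup j (by omega)
        _ ≤ M N1 := hManti (by omega)
        _ ≤ Mi + ε := le_of_lt hN1
    set p : ℕ := N1 + 1 + k with hp
    obtain ⟨n0, hn0mem, hn0eq⟩ := Finset.exists_mem_eq_inf' (hne p) b
    simp only [mem_Icc] at hn0mem
    have hbn0 : b n0 ≤ ms := by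
      rw [← hn0eq]
      exact hmsGe p
    have hbound : ∀ j, j < k → b (n0 + (N + j)) ≤ Mi - ε := by
      intro j hj
      have hx : b (n0 + (N + j)) ≤ (Mi + ε) - ρ (N + j) * (Mi + ε - ms) := by
        apply hρP (N + j) (hN (N + j) (by omega)) n0 (Mi + ε) (Mi + ε - ms)
          (by linarith) (by omega) _ (by linarith)
        intro j' hj'
        exact hup j' (by omega)
      have hge : ρmin * (Mi - ms) ≤ ρ (N + j) * (Mi + ε - ms) := by
        apply mul_le_mul
        · exact Finset.inf'_le _ (by simp [mem_range]; omega)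
        · linarith
        · linarith
        · exact le_of_lt (hρ0 (N + j) (hN (N + j) (by omega)))
      have : ρmin * (Mi - ms) = 2 * ε := by rw [hε]; ring
      linarith
    have hcontra : M (n0 + N - 1) ≤ Mi - ε := by
      apply Finset.sup'_le
      intro j hj
      simp only [mem_Icc] at hj
      have h5 : j = n0 + (N + (j - (n0 + N))) := by omega
      rw [h5]
      exact hbound (j - (n0 + N)) (by omega)
    have := hMiLe (n0 + N - 1)
    linarith
  -- conclude convergence by squeeze
  refine ⟨Mi, ?_⟩
  have htM' : Tendsto (fun j => M (j - 1)) atTop (nhds Mi) :=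
    htM.comp (tendsto_sub_atTop_nat 1)
  have htm' : Tendsto (fun j => m (j - 1)) atTop (nhds Mi) := by
    rw [← hEq] at *
    exact htm.comp (tendsto_sub_atTop_nat 1)
  apply tendsto_of_tendsto_of_tendsto_of_le_of_le' htm' htM'
  · filter_upwards [eventually_ge_atTop 1] with j hj using hblow j hj
  · filter_upwards [eventually_ge_atTop 1] with j hj using hbup j hj

lemma sum_Icc_reflect (k : ℕ) (f : ℕ → ℝ) :
    ∑ i ∈ Icc 1 k, f i = ∑ i ∈ range k, f (k - i) := by
  refine Finset.sum_nbij' (fun i => k - i) (fun m => k - m) ?_ ?_ ?_ ?_ ?_ <;>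
    simp only [mem_Icc, mem_range] <;> intros <;> first | omega | (congr 1; omega)

lemma qr_eq (k : ℕ) (hk : 1 ≤ k) (r : ℝ) (hr : 0 < r) (c : ℕ → ℕ)
    (a : ℕ → ℝ) (d : ℕ → ℝ)
    (hd : ∀ i, d i = ∑ j ∈ Finset.Icc 1 (i - 1), a j * (c (i - j) : ℝ))
    (hsum : ∑ j ∈ Icc 1 k, (c j : ℝ) / r ^ j = 1) :
    ∑ i ∈ Finset.Icc 1 k, (a i - d i) * r ^ (k - i)
      = ∑ i ∈ range k, (∑ j ∈ Icc (i + 1) k, (c j : ℝ) / r ^ j) * a (k - i) * r ^ i := by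
  have hrne : r ≠ 0 := ne_of_gt hr
  set lam : ℕ → ℝ := fun j => (c j : ℝ) / r ^ j with hlam
  -- split LHS
  have hsplit : ∑ i ∈ Finset.Icc 1 k, (a i - d i) * r ^ (k - i)
      = ∑ i ∈ Icc 1 k, a i * r ^ (k - i) - ∑ i ∈ Icc 1 k, d i * r ^ (k - i) := by
    rw [← Finset.sum_sub_distrib]
    exact Finset.sum_congr rfl fun i _ => by ring
  -- split RHS using w i = 1 - partial sum
  have hw : ∀ i ∈ range k, (∑ j ∈ Icc (i + 1) k, lam j) = 1 - ∑ j ∈ Icc 1 i, lam j := by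
    intro i hi
    simp only [mem_range] at hi
    have h1 : ∑ j ∈ Icc 1 i, lam j + ∑ j ∈ Icc (i + 1) k, lam j = ∑ j ∈ Icc 1 k, lam j := by
      have h2 := Finset.sum_Ioc_consecutive lam (Nat.zero_le i) (le_of_lt hi)
      have h3 : (Ioc 0 i : Finset ℕ) = Icc 1 i := (Finset.Icc_add_one_left_eq_Ioc 0 i).symm
      have h4 : (Ioc 0 k : Finset ℕ) = Icc 1 k := (Finset.Icc_add_one_left_eq_Ioc 0 k).symm
      have h5 : (Ioc i k : Finset ℕ) = Icc (i + 1) k := (Finset.Icc_add_one_left_eq_Ioc i k).symm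
      rw [h3, h4, h5] at h2
      exact h2
    rw [← hsum]
    linarith
  have hRHS : ∑ i ∈ range k, (∑ j ∈ Icc (i + 1) k, lam j) * a (k - i) * r ^ i
      = ∑ i ∈ range k, a (k - i) * r ^ i
        - ∑ i ∈ range k, (∑ j ∈ Icc 1 i, lam j) * a (k - i) * r ^ i := by
    rw [← Finset.sum_sub_distrib]
    apply Finset.sum_congr rfl
    intro i hi
    rw [hw i hi]
    ring
  -- first sums agree
  have hA : ∑ i ∈ Icc 1 k, a i * r ^ (k - i) = ∑ i ∈ range k, a (k - i) * r ^ i := by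
    rw [sum_Icc_reflect k (fun i => a i * r ^ (k - i))]
    apply Finset.sum_congr rfl
    intro i hi
    simp only [mem_range] at hi
    congr 2
    omega
  -- second sums agree (double sum swap)
  have hB : ∑ i ∈ Icc 1 k, d i * r ^ (k - i)
      = ∑ i ∈ range k, (∑ j ∈ Icc 1 i, lam j) * a (k - i) * r ^ i := by
    -- expand d and push r^ (k - i) inside; reflect outer index
    have e1 : ∑ i ∈ Icc 1 k, d i * r ^ (k - i)
        = ∑ m ∈ range k, ∑ j ∈ Icc 1 (k - m - 1), a j * (c (k - m - j) : ℝ) * r ^ m := by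
      rw [sum_Icc_reflect k (fun i => d i * r ^ (k - i))]
      apply Finset.sum_congr rfl
      intro m hm
      simp only [mem_range] at hm
      rw [hd (k - m), Finset.sum_mul]
      have hkm : k - (k - m) = m := by omega
      rw [hkm]
    have e2 : ∑ i ∈ range k, (∑ j ∈ Icc 1 i, lam j) * a (k - i) * r ^ i
        = ∑ m ∈ range k, ∑ t ∈ Icc 1 m, lam t * a (k - m) * r ^ m := by
      apply Finset.sum_congr rfl
      intro m _
      rw [Finset.sum_mul, Finset.sum_mul]
    rw [e1, e2, Finset.sum_sigma', Finset.sum_sigma']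
    refine Finset.sum_nbij' (fun x => ⟨k - x.2, k - x.1 - x.2⟩)
      (fun x => ⟨x.1 - x.2, k - x.1⟩) ?_ ?_ ?_ ?_ ?_
    · rintro ⟨m, j⟩ hmem
      simp only [mem_sigma, mem_range, mem_Icc] at hmem ⊢
      omega
    · rintro ⟨m, t⟩ hmem
      simp only [mem_sigma, mem_range, mem_Icc] at hmem ⊢
      omega
    · rintro ⟨m, j⟩ hmem
      simp only [mem_sigma, mem_range, mem_Icc] at hmem
      refine Sigma.ext ?_ (heq_of_eq ?_) <;> dsimp only <;> omega
    · rintro ⟨m, t⟩ hmem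
      simp only [mem_sigma, mem_range, mem_Icc] at hmem
      refine Sigma.ext ?_ (heq_of_eq ?_) <;> dsimp only <;> omega
    · rintro ⟨m, j⟩ hmem
      simp only [mem_sigma, mem_range, mem_Icc] at hmem
      show a j * (c (k - m - j) : ℝ) * r ^ m
        = lam (k - m - j) * a (k - (k - j)) * r ^ (k - j)
      have h1 : k - (k - j) = j := by omega
      have h2 : lam (k - m - j) * r ^ (k - j) = (c (k - m - j) : ℝ) * r ^ m := by
        rw [hlam]
        have h3 : r ^ (k - j) = r ^ (k - m - j) * r ^ m := by
          rw [← pow_add]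
          congr 1
          omega
        field_simp
        rw [h3]
        ring
      rw [h1]
      calc a j * (c (k - m - j) : ℝ) * r ^ m
          = a j * ((c (k - m - j) : ℝ) * r ^ m) := by ring
        _ = a j * (lam (k - m - j) * r ^ (k - j)) := by rw [h2]
        _ = lam (k - m - j) * a j * r ^ (k - j) := by ring
  rw [hsplit, hRHS, hA, hB]


open Polynomial

/-- Fast determination of divergence: for a real sequence `a` (indexed from 1)
satisfying the recurrence, with `d_i = Σ_{j=1}^{i-1} a_j c_{i-j}` and
`Q(x) = a₁ x^(k-1) + (a₂-d₂) x^(k-2) + ⋯ + (a_k-d_k)`, the limit `L = lim a_n / r^n`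
exists, and `L` is positive, zero, or negative according as `Q(r)` is. -/
theorem divergence_determination
    (k : ℕ) (hk : 1 ≤ k) (c : ℕ → ℕ) (hck : 0 < c k)
    (hgcd : Finset.gcd ((Finset.Icc 1 k).filter fun m => c m ≠ 0) id = 1)
    (P : Polynomial ℝ)
    (hP : P = X ^ k - ∑ i ∈ Finset.Icc 1 k, C (c i : ℝ) * X ^ (k - i))
    (r : ℝ) (hr : 0 < r) (hroot : P.IsRoot r)
    (a : ℕ → ℝ)
    (hrec : ∀ n, k ≤ n → a (n + 1) = ∑ i ∈ Finset.Icc 1 k, (c i : ℝ) * a (n + 1 - i))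
    (d : ℕ → ℝ)
    (hd : ∀ i, d i = ∑ j ∈ Finset.Icc 1 (i - 1), a j * (c (i - j) : ℝ))
    (Qr : ℝ)
    (hQr : Qr = ∑ i ∈ Finset.Icc 1 k, (a i - d i) * r ^ (k - i)) :
    ∃ L : ℝ,
      Filter.Tendsto (fun n => a n / r ^ n) Filter.atTop (nhds L) ∧
      (0 < Qr → 0 < L) ∧ (Qr = 0 → L = 0) ∧ (Qr < 0 → L < 0) := by
  obtain ⟨K, rfl⟩ : ∃ K, k = K + 1 := ⟨k - 1, by omega⟩
  have hrne : r ≠ 0 := ne_of_gt hr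
  have hrpow : ∀ n : ℕ, (0 : ℝ) < r ^ n := fun n => pow_pos hr n
  set lam : ℕ → ℝ := fun i => (c i : ℝ) / r ^ i with hlamdef
  set b : ℕ → ℝ := fun n => a n / r ^ n with hbdef
  -- the root identity
  have hev : r ^ (K + 1) = ∑ i ∈ Finset.Icc 1 (K + 1), (c i : ℝ) * r ^ (K + 1 - i) := by
    have h0 : Polynomial.eval r P = 0 := hroot
    rw [hP] at h0
    simp only [Polynomial.eval_sub, Polynomial.eval_pow, Polynomial.eval_X,
      Polynomial.eval_finset_sum, Polynomial.eval_mul, Polynomial.eval_C] at h0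
    linarith
  have hpowsplit : ∀ i, i ≤ K + 1 → r ^ (K + 1) = r ^ (K + 1 - i) * r ^ i := by
    intro i hi
    rw [← pow_add]
    congr 1
    omega
  have hsum : ∑ i ∈ Finset.Icc 1 (K + 1), lam i = 1 := by
    have h1 : ∀ i ∈ Finset.Icc 1 (K + 1),
        lam i = (c i : ℝ) * r ^ (K + 1 - i) / r ^ (K + 1) := by
      intro i hi
      simp only [Finset.mem_Icc] at hi
      rw [hlamdef]
      dsimp only
      rw [hpowsplit i hi.2]
      field_simp
    rw [Finset.sum_congr rfl h1, ← Finset.sum_div, ← hev, div_self (hrpow (K + 1)).ne']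
  have hnn : ∀ i, 0 ≤ lam i := by
    intro i
    apply div_nonneg (Nat.cast_nonneg _) (le_of_lt (hrpow i))
  have hb : ∀ n, K + 1 ≤ n → b (n + 1) = ∑ i ∈ Finset.Icc 1 (K + 1), lam i * b (n + 1 - i) := by
    intro n hn
    rw [hbdef]
    dsimp only
    rw [hrec n hn, Finset.sum_div]
    apply Finset.sum_congr rfl
    intro i hi
    simp only [Finset.mem_Icc] at hi
    have h2 : r ^ (n + 1) = r ^ i * r ^ (n + 1 - i) := by
      rw [← pow_add]
      congr 1
      omega
    show (c i : ℝ) * a (n + 1 - i) / r ^ (n + 1)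
      = (c i : ℝ) / r ^ i * (a (n + 1 - i) / r ^ (n + 1 - i))
    rw [div_mul_div_comm, ← h2]
  -- convergence from the key lemma
  have hSpos : ∀ s ∈ (Finset.Icc 1 (K + 1)).filter (fun m => c m ≠ 0), 0 < lam s := by
    intro s hs
    simp only [Finset.mem_filter] at hs
    exact div_pos (by exact_mod_cast Nat.pos_of_ne_zero hs.2) (hrpow s)
  obtain ⟨L, hLt⟩ := key_conv (K + 1) (by omega) lam hnn hsum
    ((Finset.Icc 1 (K + 1)).filter (fun m => c m ≠ 0)) (Finset.filter_subset _ _)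
    hSpos hgcd b hb
  -- the conserved quantity
  set w : ℕ → ℝ := fun i => ∑ j ∈ Finset.Icc (i + 1) (K + 1), lam j with hwdef
  set V : ℕ → ℝ := fun n => ∑ i ∈ Finset.range (K + 1), w i * b (n - i) with hVdef
  have hw0 : w 0 = 1 := by
    rw [hwdef]
    dsimp only
    simpa using hsum
  have hwstep : ∀ i, i + 1 ≤ K + 1 → w i = lam (i + 1) + w (i + 1) := by
    intro i hik
    rw [hwdef]
    dsimp only
    have hins : (Finset.Icc (i + 1) (K + 1) : Finset ℕ)
        = insert (i + 1) (Finset.Icc (i + 2) (K + 1)) := by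
      ext x
      simp only [Finset.mem_Icc, Finset.mem_insert]
      omega
    rw [hins, Finset.sum_insert (by simp only [Finset.mem_Icc]; omega)]
  have hwK : w K = lam (K + 1) := by
    have h1 := hwstep K (le_refl _)
    have h2 : w (K + 1) = 0 := by
      rw [hwdef]
      dsimp only
      rw [Finset.Icc_eq_empty (by omega)]
      simp
    rw [h1, h2, add_zero]
  have hwnn : ∀ i, 0 ≤ w i := by
    intro i
    rw [hwdef]
    dsimp only
    exact Finset.sum_nonneg fun j _ => hnn j
  have hb' : ∀ n, K + 1 ≤ n →
      b (n + 1) = ∑ i ∈ Finset.range (K + 1), lam (i + 1) * b (n - i) := by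
    intro n hn
    rw [hb n hn, ← Finset.Ico_add_one_right_eq_Icc, Finset.sum_Ico_eq_sum_range]
    have hr1 : K + 1 + 1 - 1 = K + 1 := by omega
    rw [hr1]
    apply Finset.sum_congr rfl
    intro i _
    have h3 : 1 + i = i + 1 := by omega
    rw [h3]
    have h4 : n + 1 - (i + 1) = n - i := by omega
    rw [h4]
  have hVstep : ∀ n, K + 1 ≤ n → V (n + 1) = V n := by
    intro n hn
    have hbn := hb' n hn
    rw [hVdef]
    dsimp only
    rw [Finset.sum_range_succ' (fun i => w i * b (n + 1 - i)) K]
    rw [Finset.sum_range_succ (fun i => w i * b (n - i)) K]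
    simp only [Nat.add_sub_add_right, Nat.sub_zero, hw0, one_mul]
    rw [hbn, Finset.sum_range_succ]
    have hR : ∑ i ∈ Finset.range K, w i * b (n - i)
        = ∑ i ∈ Finset.range K, (lam (i + 1) * b (n - i) + w (i + 1) * b (n - i)) := by
      apply Finset.sum_congr rfl
      intro i hi
      simp only [Finset.mem_range] at hi
      rw [hwstep i (by omega)]
      ring
    rw [hR, Finset.sum_add_distrib, hwK]
    ring
  have hVconst : ∀ n, K + 1 ≤ n → V n = V (K + 1) := by
    intro n hn
    induction n, hn using Nat.le_induction with
    | base => rfl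
    | succ n hn ih => rw [hVstep n hn, ih]
  have htV : Filter.Tendsto V Filter.atTop (nhds (∑ i ∈ Finset.range (K + 1), w i * L)) := by
    rw [hVdef]
    apply tendsto_finset_sum
    intro i _
    exact (hLt.comp (tendsto_sub_atTop_nat i)).const_mul (w i)
  have hVlim : ∑ i ∈ Finset.range (K + 1), w i * L = V (K + 1) := by
    apply tendsto_nhds_unique htV
    apply Filter.Tendsto.congr' _ tendsto_const_nhds
    filter_upwards [Filter.eventually_ge_atTop (K + 1)] with n hn
    exact (hVconst n hn).symm
  -- identify the conserved quantity with Qr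
  have hQr2 : Qr = ∑ i ∈ Finset.range (K + 1), w i * a (K + 1 - i) * r ^ i := by
    rw [hQr]
    exact qr_eq (K + 1) (by omega) r hr c a d hd hsum
  have hVkQr : V (K + 1) * r ^ (K + 1) = Qr := by
    rw [hQr2, hVdef]
    dsimp only
    rw [Finset.sum_mul]
    apply Finset.sum_congr rfl
    intro i hi
    simp only [Finset.mem_range] at hi
    rw [hbdef]
    dsimp only
    show w i * (a (K + 1 - i) / r ^ (K + 1 - i)) * r ^ (K + 1) = w i * a (K + 1 - i) * r ^ i
    rw [hpowsplit i (by omega)]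
    field_simp
  set W : ℝ := ∑ i ∈ Finset.range (K + 1), w i with hW
  have hWpos : 0 < W := by
    rw [hW]
    apply Finset.sum_pos' (fun i _ => hwnn i)
    refine ⟨K, Finset.self_mem_range_succ K, ?_⟩
    rw [hwK]
    exact div_pos (by exact_mod_cast hck) (hrpow (K + 1))
  have hT : 0 < W * r ^ (K + 1) := mul_pos hWpos (hrpow (K + 1))
  have hLW : L * (W * r ^ (K + 1)) = Qr := by
    have h3 : ∑ i ∈ Finset.range (K + 1), w i * L = W * L := by
      rw [hW, Finset.sum_mul]
    calc L * (W * r ^ (K + 1)) = (W * L) * r ^ (K + 1) := by ring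
      _ = V (K + 1) * r ^ (K + 1) := by rw [← h3, hVlim]
      _ = Qr := hVkQr
  refine ⟨L, hLt, ?_, ?_, ?_⟩
  · intro h
    by_contra h'
    push_neg at h'
    nlinarith
  · intro h
    have h5 : L * (W * r ^ (K + 1)) = 0 := by rw [hLW, h]
    rcases mul_eq_zero.mp h5 with h6 | h6
    · exact h6
    · exact absurd h6 (ne_of_gt hT)
  · intro h
    by_contra h'
    push_neg at h'
    nlinarith
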